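/- Let ψ : Ω → ℝ be C³ with nonvanishing gradient on an open set Ω ⊆ ℝⁿ⁺¹, and let f : ℝ → ℝ be C³ with f' nowhere zero. Then at every point of Ω, ∇·( Δ(f∘ψ) · ∇(f∘ψ) / |∇(f∘ψ)|² ) − Δ log |∇(f∘ψ)| = ∇·( Δψ · ∇ψ / |∇ψ|² ) − Δ log |∇ψ|. In other words, the combination ∇·(V∇ψ/F²) − Δ log F is invariant under composition ψ ↦ f∘ψ with a diffeomorphism f of the real line. -/

import Mathlib

open Real

/-- Partial derivative along the `i`-th coordinate direction in `Fin d → ℝ`. -/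
noncomputable def pd {d : ℕ} (i : Fin d) (f : (Fin d → ℝ) → ℝ) (x : Fin d → ℝ) : ℝ :=
  fderiv ℝ f x (Pi.single i 1)

/-- The flat Laplacian on `Fin d → ℝ`. -/
noncomputable def lap {d : ℕ} (f : (Fin d → ℝ) → ℝ) (x : Fin d → ℝ) : ℝ :=
  ∑ i, pd i (pd i f) x

/-- The combination ∇·(Δg · ∇g / |∇g|²) − Δ log |∇g|, which equals the Ricci scalar
curvature of the level sets of `g`. -/
noncomputable def curvExpr {d : ℕ} (g : (Fin d → ℝ) → ℝ) (x : Fin d → ℝ) : ℝ :=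
  (∑ i, pd i (fun y => lap g y * pd i g y / (∑ j, (pd j g y) ^ 2)) x) -
    lap (fun y => Real.log (Real.sqrt (∑ j, (pd j g y) ^ 2))) x

lemma contDiffAt_pd' {d : ℕ} {m nn : WithTop ℕ∞} {f : (Fin d → ℝ) → ℝ} {x : Fin d → ℝ}
    (h : ContDiffAt ℝ nn f x) (hmn : m + 1 ≤ nn) (i : Fin d) :
    ContDiffAt ℝ m (pd i f) x :=
  (h.fderiv_right hmn).clm_apply contDiffAt_const

lemma pd_comp' {d : ℕ} {g : ℝ → ℝ} {ψ : (Fin d → ℝ) → ℝ} {x : Fin d → ℝ}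
    (hg : DifferentiableAt ℝ g (ψ x)) (hψ : DifferentiableAt ℝ ψ x) (i : Fin d) :
    pd i (fun y => g (ψ y)) x = deriv g (ψ x) * pd i ψ x := by
  have h := hg.hasDerivAt.comp_hasFDerivAt x hψ.hasFDerivAt
  have h2 : fderiv ℝ (fun y => g (ψ y)) x = deriv g (ψ x) • fderiv ℝ ψ x := h.fderiv
  simp only [pd, h2, ContinuousLinearMap.smul_apply, smul_eq_mul]

lemma pd_add' {d : ℕ} {u v : (Fin d → ℝ) → ℝ} {x : Fin d → ℝ}
    (hu : DifferentiableAt ℝ u x) (hv : DifferentiableAt ℝ v x) (i : Fin d) :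
    pd i (fun y => u y + v y) x = pd i u x + pd i v x := by
  simp only [pd, fderiv_fun_add hu hv, ContinuousLinearMap.add_apply]

lemma pd_mul' {d : ℕ} {u v : (Fin d → ℝ) → ℝ} {x : Fin d → ℝ}
    (hu : DifferentiableAt ℝ u x) (hv : DifferentiableAt ℝ v x) (i : Fin d) :
    pd i (fun y => u y * v y) x = pd i u x * v x + u x * pd i v x := by
  simp only [pd, fderiv_fun_mul hu hv, ContinuousLinearMap.add_apply,
    ContinuousLinearMap.smul_apply, smul_eq_mul]
  ring

lemma pd_congr_on' {d : ℕ} {Ω : Set (Fin d → ℝ)} (hΩ : IsOpen Ω) {u v : (Fin d → ℝ) → ℝ}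
    (h : ∀ y ∈ Ω, u y = v y) {x : Fin d → ℝ} (hx : x ∈ Ω) (i : Fin d) :
    pd i u x = pd i v x := by
  have he : u =ᶠ[nhds x] v := Filter.eventuallyEq_of_mem (hΩ.mem_nhds hx) h
  simp only [pd, he.fderiv_eq]

theorem diffeomorphic_invariance (n : ℕ)
    (Ω : Set (Fin (n + 1) → ℝ)) (hΩ : IsOpen Ω)
    (ψ : (Fin (n + 1) → ℝ) → ℝ) (hψ : ContDiffOn ℝ 3 ψ Ω)
    (hgrad : ∀ x ∈ Ω, (∑ j, (pd j ψ x) ^ 2) ≠ 0)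
    (f : ℝ → ℝ) (hf : ContDiff ℝ 3 f) (hf' : ∀ t, deriv f t ≠ 0) :
    ∀ x ∈ Ω, curvExpr (f ∘ ψ) x = curvExpr ψ x := by
  intro x hx
  -- regularity of f and its derivatives
  have h32 : (3 : WithTop ℕ∞) = 2 + 1 := by norm_num
  have h21 : (2 : WithTop ℕ∞) = 1 + 1 := by norm_num
  have haC : ContDiff ℝ 2 (deriv f) := by
    rw [h32] at hf; exact (contDiff_succ_iff_deriv.mp hf).2.2
  have ha'C : ContDiff ℝ 1 (deriv (deriv f)) := by
    rw [h21] at haC; exact (contDiff_succ_iff_deriv.mp haC).2.2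
  have hfd : Differentiable ℝ f := hf.differentiable (by norm_num)
  have hadiff : Differentiable ℝ (deriv f) := haC.differentiable (by norm_num)
  have ha'diff : Differentiable ℝ (deriv (deriv f)) := ha'C.differentiable (by norm_num)
  set q : ℝ → ℝ := fun t => deriv (deriv f) t / deriv f t with hqdef
  have hqdiff : ∀ t, DifferentiableAt ℝ q t := fun t =>
    (ha'diff t).div (hadiff t) (hf' t)
  -- the 1-d "log derivative" computation
  have hL : ∀ t, HasDerivAt (fun s => Real.log ((deriv f s) ^ 2) / 2) (q t) t := by
    intro t
    have h1 : HasDerivAt (deriv f) (deriv (deriv f) t) t := (hadiff t).hasDerivAt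
    have h2 := ((h1.fun_pow 2).log (pow_ne_zero 2 (hf' t))).div_const 2
    refine h2.congr_deriv ?_
    have := hf' t
    rw [hqdef]
    field_simp
    ring
  -- point facts on Ω
  have hψC : ∀ y ∈ Ω, ContDiffAt ℝ 3 ψ y := fun y hy => hψ.contDiffAt (hΩ.mem_nhds hy)
  have hψd : ∀ y ∈ Ω, DifferentiableAt ℝ ψ y := fun y hy =>
    (hψC y hy).differentiableAt (by norm_num)
  have hpdC : ∀ (i : Fin (n+1)), ∀ y ∈ Ω, ContDiffAt ℝ 2 (pd i ψ) y := fun i y hy =>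
    contDiffAt_pd' (hψC y hy) (by norm_num) i
  have hpdd : ∀ (i : Fin (n+1)), ∀ y ∈ Ω, DifferentiableAt ℝ (pd i ψ) y := fun i y hy =>
    (hpdC i y hy).differentiableAt (by norm_num)
  have hpd2d : ∀ (i : Fin (n+1)), ∀ y ∈ Ω, DifferentiableAt ℝ (pd i (pd i ψ)) y := fun i y hy =>
    (contDiffAt_pd' (m := 1) (hpdC i y hy) (by norm_num) i).differentiableAt (by norm_num)
  have hSC : ∀ y ∈ Ω, ContDiffAt ℝ 2 (fun z => ∑ j, (pd j ψ z) ^ 2) y := fun y hy =>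
    ContDiffAt.sum fun j _ => (hpdC j y hy).pow 2
  have hSd : ∀ y ∈ Ω, DifferentiableAt ℝ (fun z => ∑ j, (pd j ψ z) ^ 2) y := fun y hy =>
    (hSC y hy).differentiableAt (by norm_num)
  have hVd : ∀ y ∈ Ω, DifferentiableAt ℝ (lap ψ) y := fun y hy => by
    have : DifferentiableAt ℝ (fun z => ∑ i, pd i (pd i ψ) z) y :=
      DifferentiableAt.fun_sum fun i _ => hpd2d i y hy
    exact this
  -- chain rule facts
  have hcomp : ∀ y ∈ Ω, ∀ i, pd i (f ∘ ψ) y = deriv f (ψ y) * pd i ψ y := fun y hy i =>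
    pd_comp' (hfd (ψ y)) (hψd y hy) i
  have hSg : ∀ y ∈ Ω, (∑ j, (pd j (f ∘ ψ) y) ^ 2)
      = (deriv f (ψ y)) ^ 2 * ∑ j, (pd j ψ y) ^ 2 := by
    intro y hy
    rw [Finset.mul_sum]
    exact Finset.sum_congr rfl fun j _ => by rw [hcomp y hy j, mul_pow]
  have hlapg : ∀ y ∈ Ω, lap (f ∘ ψ) y
      = deriv (deriv f) (ψ y) * (∑ j, (pd j ψ y) ^ 2) + deriv f (ψ y) * lap ψ y := by
    intro y hy
    have h1 : ∀ i : Fin (n+1), pd i (pd i (f ∘ ψ)) y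
        = deriv (deriv f) (ψ y) * (pd i ψ y) ^ 2 + deriv f (ψ y) * pd i (pd i ψ) y := by
      intro i
      have e1 : pd i (pd i (f ∘ ψ)) y
          = pd i (fun z => deriv f (ψ z) * pd i ψ z) y :=
        pd_congr_on' hΩ (fun z hz => hcomp z hz i) hy i
      rw [e1, pd_mul' (u := fun z => deriv f (ψ z)) (v := pd i ψ)
          ((hadiff (ψ y)).comp y (hψd y hy)) (hpdd i y hy) i,
        pd_comp' (hadiff (ψ y)) (hψd y hy) i]
      ring
    show (∑ i, pd i (pd i (f ∘ ψ)) y) = _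
    rw [Finset.sum_congr rfl fun i _ => h1 i, Finset.sum_add_distrib,
      ← Finset.mul_sum, ← Finset.mul_sum]
    rfl
  -- differentiability of the pieces at points of Ω
  have hPd : ∀ (i : Fin (n+1)), ∀ y ∈ Ω,
      DifferentiableAt ℝ (fun z => q (ψ z) * pd i ψ z) y := fun i y hy =>
    ((hqdiff (ψ y)).comp y (hψd y hy)).mul (hpdd i y hy)
  have hBd : ∀ (i : Fin (n+1)), ∀ y ∈ Ω,
      DifferentiableAt ℝ (fun z => lap ψ z * pd i ψ z / ∑ j, (pd j ψ z) ^ 2) y := by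
    intro i y hy
    simp only [div_eq_mul_inv]
    exact ((hVd y hy).mul (hpdd i y hy)).mul ((hSd y hy).inv (hgrad y hy))
  -- C1 : divergence term
  have C1 : ∀ i : Fin (n+1),
      pd i (fun y => lap (f ∘ ψ) y * pd i (f ∘ ψ) y / (∑ j, (pd j (f ∘ ψ) y) ^ 2)) x
      = pd i (fun z => q (ψ z) * pd i ψ z) x
        + pd i (fun z => lap ψ z * pd i ψ z / ∑ j, (pd j ψ z) ^ 2) x := by
    intro i
    have e1 : pd i (fun y => lap (f ∘ ψ) y * pd i (f ∘ ψ) y / (∑ j, (pd j (f ∘ ψ) y) ^ 2)) x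
        = pd i (fun z => q (ψ z) * pd i ψ z + lap ψ z * pd i ψ z / ∑ j, (pd j ψ z) ^ 2) x := by
      refine pd_congr_on' hΩ (fun y hy => ?_) hx i
      rw [hlapg y hy, hcomp y hy i, hSg y hy, hqdef]
      have ha0 := hf' (ψ y)
      have hS0 := hgrad y hy
      field_simp
    rw [e1]
    exact pd_add' (hPd i x hx) (hBd i x hx) i
  -- log-sqrt rewriting
  have hsqrt : ∀ g : (Fin (n+1) → ℝ) → ℝ,
      (fun y => Real.log (Real.sqrt (∑ j, (pd j g y) ^ 2)))
      = fun y => Real.log (∑ j, (pd j g y) ^ 2) / 2 := fun g =>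
    funext fun y => Real.log_sqrt (Finset.sum_nonneg fun j _ => sq_nonneg _)
  -- regularity of B = log S / 2
  have hBC : ∀ y ∈ Ω, ContDiffAt ℝ 2 (fun z => Real.log (∑ j, (pd j ψ z) ^ 2) / 2) y :=
    fun y hy => ((hSC y hy).log (hgrad y hy)).div_const 2
  have hBdiff : ∀ y ∈ Ω, DifferentiableAt ℝ (fun z => Real.log (∑ j, (pd j ψ z) ^ 2) / 2) y :=
    fun y hy => (hBC y hy).differentiableAt (by norm_num)
  have hpdBd : ∀ i : Fin (n+1),
      DifferentiableAt ℝ (pd i (fun z => Real.log (∑ j, (pd j ψ z) ^ 2) / 2)) x := fun i =>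
    (contDiffAt_pd' (m := 1) (hBC x hx) (by norm_num) i).differentiableAt (by norm_num)
  -- pd of the A-part
  have hA : ∀ (i : Fin (n+1)), ∀ y ∈ Ω,
      pd i (fun z => Real.log ((deriv f (ψ z)) ^ 2) / 2) y = q (ψ y) * pd i ψ y := by
    intro i y hy
    have : pd i (fun z => (fun s => Real.log ((deriv f s) ^ 2) / 2) (ψ z)) y
        = deriv (fun s => Real.log ((deriv f s) ^ 2) / 2) (ψ y) * pd i ψ y :=
      pd_comp' (hL (ψ y)).differentiableAt (hψd y hy) i
    rw [this, (hL (ψ y)).deriv]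
  have hAd : ∀ y ∈ Ω, DifferentiableAt ℝ (fun z => Real.log ((deriv f (ψ z)) ^ 2) / 2) y :=
    fun y hy => (hL (ψ y)).differentiableAt.comp y (hψd y hy)
  -- pointwise splitting of the log term of the composite
  have hlogg : ∀ y ∈ Ω, Real.log (∑ j, (pd j (f ∘ ψ) y) ^ 2) / 2
      = Real.log ((deriv f (ψ y)) ^ 2) / 2 + Real.log (∑ j, (pd j ψ y) ^ 2) / 2 := by
    intro y hy
    rw [hSg y hy, Real.log_mul (pow_ne_zero 2 (hf' (ψ y))) (hgrad y hy)]
    ring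
  -- C2 : second-order log term
  have C2 : ∀ i : Fin (n+1),
      pd i (pd i (fun y => Real.log (∑ j, (pd j (f ∘ ψ) y) ^ 2) / 2)) x
      = pd i (fun z => q (ψ z) * pd i ψ z) x
        + pd i (pd i (fun z => Real.log (∑ j, (pd j ψ z) ^ 2) / 2)) x := by
    intro i
    have step : ∀ y ∈ Ω,
        pd i (fun z => Real.log (∑ j, (pd j (f ∘ ψ) z) ^ 2) / 2) y
        = q (ψ y) * pd i ψ y + pd i (fun z => Real.log (∑ j, (pd j ψ z) ^ 2) / 2) y := by
      intro y hy
      have e1 : pd i (fun z => Real.log (∑ j, (pd j (f ∘ ψ) z) ^ 2) / 2) y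
          = pd i (fun z => Real.log ((deriv f (ψ z)) ^ 2) / 2
              + Real.log (∑ j, (pd j ψ z) ^ 2) / 2) y :=
        pd_congr_on' hΩ hlogg hy i
      rw [e1, pd_add' (hAd y hy) (hBdiff y hy) i, hA i y hy]
    have e2 : pd i (pd i (fun y => Real.log (∑ j, (pd j (f ∘ ψ) y) ^ 2) / 2)) x
        = pd i (fun y => q (ψ y) * pd i ψ y
            + pd i (fun z => Real.log (∑ j, (pd j ψ z) ^ 2) / 2) y) x :=
      pd_congr_on' hΩ step hx i
    rw [e2]
    exact pd_add' (hPd i x hx) (hpdBd i) i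
  -- assemble
  have lap_eq : ∀ (F : (Fin (n+1) → ℝ) → ℝ) (y : Fin (n+1) → ℝ),
      lap F y = ∑ i, pd i (pd i F) y := fun _ _ => rfl
  show (∑ i, pd i (fun y => lap (f ∘ ψ) y * pd i (f ∘ ψ) y / (∑ j, (pd j (f ∘ ψ) y) ^ 2)) x) -
      lap (fun y => Real.log (Real.sqrt (∑ j, (pd j (f ∘ ψ) y) ^ 2))) x
    = (∑ i, pd i (fun y => lap ψ y * pd i ψ y / (∑ j, (pd j ψ y) ^ 2)) x) -
      lap (fun y => Real.log (Real.sqrt (∑ j, (pd j ψ y) ^ 2))) x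
  rw [hsqrt (f ∘ ψ), hsqrt ψ, lap_eq, lap_eq,
    Finset.sum_congr rfl fun i _ => C1 i,
    Finset.sum_congr rfl fun i _ => C2 i,
    Finset.sum_add_distrib, Finset.sum_add_distrib]
  ring
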